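/- For any finite-dimensional complex representation V of a finite group G, there exist two distinct polynomials f, g with nonnegative integer coefficients such that f(V) ≅ g(V) as G-representations. -/

import Mathlib

open CategoryTheory CategoryTheory.Limits MonoidalCategory

noncomputable instance {k G : Type} [Field k] [Monoid G] :
    HasFiniteBiproducts (FDRep k G) :=
  HasFiniteBiproducts.of_hasFiniteProducts

/-- `k`-th tensor power of a finite-dimensional representation. -/
noncomputable def tensorPow {k G : Type} [Field k] [Monoid G] (V : FDRep k G) :
    ℕ → FDRep k G
  | 0 => 𝟙_ (FDRep k G)
  | n + 1 => tensorPow V n ⊗ V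

/-- For a polynomial with nonnegative integer coefficients `a : Fin (N+1) → ℕ`,
`polyApply a V = ⊕_k (V^{⊗k})^{⊕ a_k}`. -/
noncomputable def polyApply {k G : Type} [Field k] [Monoid G] {N : ℕ}
    (a : Fin (N + 1) → ℕ) (V : FDRep k G) : FDRep k G :=
  ⨁ fun j : Fin (N + 1) => ⨁ fun _ : Fin (a j) => tensorPow V (j : ℕ)

namespace Stmt12Aux

/-! ### Module-theoretic decomposition over a semisimple ring -/

open scoped DirectSum in
theorem decompA (A : Type) [Ring A] [IsSemisimpleRing A] (M : Type) [AddCommGroup M] [Module A M]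
    [Module.Finite A M] :
    ∃ (n : ℕ) (p : Fin n → Submodule A M), (∀ i, IsSimpleModule A (p i)) ∧
      Nonempty (M ≃ₗ[A] ((i : Fin n) → p i)) := by
  classical
  obtain ⟨s, hfin, hindep, hsup, hsimple⟩ :=
    ((IsSemisimpleModule.finite_tfae (R := A) (M := M)).out 0 4).mp ‹_›
  haveI : Fintype s := hfin.fintype
  have hinternal : DirectSum.IsInternal (fun i : s => (i : Submodule A M)) := by
    rw [DirectSum.isInternal_submodule_iff_iSupIndep_and_iSup_eq_top]
    constructor
    · exact (sSupIndep_iff s).mp hindep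
    · rw [← sSup_eq_iSup']; exact hsup
  have e1 : (⨁ i : s, (i : Submodule A M)) ≃ₗ[A] M :=
    LinearEquiv.ofBijective (DirectSum.coeLinearMap _) hinternal
  have e2 : (⨁ i : s, (i : Submodule A M)) ≃ₗ[A] ((i : s) → (i : Submodule A M)) :=
    DirectSum.linearEquivFunOnFintype A s _
  let n := Fintype.card s
  let e : Fin n ≃ s := (Fintype.equivFin s).symm
  refine ⟨n, fun i => (e i : Submodule A M), fun i => hsimple _ (e i).2, ⟨?_⟩⟩
  exact e1.symm.trans <| e2.trans (LinearEquiv.piCongrLeft A (fun i : s => (i : Submodule A M)) e).symm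

theorem simplesA (A : Type) [Ring A] [IsSemisimpleRing A] [Nontrivial A] :
    ∃ (r : ℕ) (T : Fin r → Submodule A A), (∀ i, IsSimpleModule A (T i)) ∧
      ∀ (S : Type) [AddCommGroup S] [Module A S], IsSimpleModule A S →
        ∃ i, Nonempty (S ≃ₗ[A] T i) := by
  classical
  obtain ⟨s, hfin, hindep, hsup, hsimple⟩ :=
    ((IsSemisimpleModule.finite_tfae (R := A) (M := A)).out 0 4).mp (Module.Finite.self A)
  haveI : Fintype s := hfin.fintype
  let e : Fin (Fintype.card s) ≃ s := (Fintype.equivFin s).symm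
  refine ⟨Fintype.card s, fun i => (e i : Submodule A A), fun i => hsimple _ (e i).2, ?_⟩
  intro S _ _ hS
  haveI := hS
  haveI : Nontrivial S := IsSimpleModule.nontrivial A S
  obtain ⟨x, hx⟩ := exists_ne (0 : S)
  let φ : A →ₗ[A] S := LinearMap.toSpanSingleton A S x
  have hφ1 : φ 1 = x := one_smul A x
  have : ∃ i : Fin (Fintype.card s), φ.comp (Submodule.subtype (e i : Submodule A A)) ≠ 0 := by
    by_contra h
    push_neg at h
    have hker : ∀ m ∈ s, m ≤ LinearMap.ker φ := by
      intro m hm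
      have := h (e.symm ⟨m, hm⟩)
      intro a ha
      have : φ a = 0 := by
        have h2 := LinearMap.congr_fun this ⟨a, by simpa [e] using ha⟩
        simpa [e] using h2
      simpa [LinearMap.mem_ker] using this
    have : (⊤ : Submodule A A) ≤ LinearMap.ker φ := by
      rw [← hsup]; exact sSup_le hker
    have : φ = 0 := LinearMap.ker_eq_top.mp (top_le_iff.mp this)
    exact hx (by simpa [this] using hφ1.symm)
  obtain ⟨i, hi⟩ := this
  haveI : IsSimpleModule A (e i : Submodule A A) := hsimple _ (e i).2
  have hbij := (LinearMap.bijective_or_eq_zero (φ.comp (Submodule.subtype _))).resolve_right hi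
  exact ⟨i, ⟨(LinearEquiv.ofBijective _ hbij).symm⟩⟩

/-- Regrouping a product of submodules `T (ix j)` by the value of `ix`. -/
def regroup (A : Type) [Ring A] {B : Type} [AddCommGroup B] [Module A B]
    {n r : ℕ} (T : Fin r → Submodule A B) (ix : Fin n → Fin r) :
    ((j : Fin n) → T (ix j)) ≃ₗ[A] ((i : Fin r) → {j : Fin n // ix j = i} → T i) where
  toFun x := fun i j => j.2 ▸ x j.1
  invFun y := fun j => y (ix j) ⟨j, rfl⟩
  map_add' x y := by
    funext i j
    obtain ⟨j, hj⟩ := j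
    subst hj
    rfl
  map_smul' a x := by
    funext i j
    obtain ⟨j, hj⟩ := j
    subst hj
    rfl
  left_inv x := rfl
  right_inv y := by
    funext i j
    obtain ⟨j, hj⟩ := j
    subst hj
    rfl

theorem decompT (A : Type) [Ring A] [IsSemisimpleRing A] {r : ℕ} (T : Fin r → Submodule A A)
    (hT : ∀ (S : Type) [AddCommGroup S] [Module A S], IsSimpleModule A S →
      ∃ i, Nonempty (S ≃ₗ[A] T i))
    (M : Type) [AddCommGroup M] [Module A M] [Module.Finite A M] :
    ∃ c : Fin r → ℕ, Nonempty (M ≃ₗ[A] ((i : Fin r) → Fin (c i) → T i)) := by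
  classical
  obtain ⟨n, p, hp, ⟨e⟩⟩ := decompA A M
  have h := fun j => hT (p j) (hp j)
  choose ix hix using h
  let eqv : (j : Fin n) → (p j ≃ₗ[A] T (ix j)) := fun j => Classical.choice (hix j)
  refine ⟨fun i => Fintype.card {j : Fin n // ix j = i}, ⟨?_⟩⟩
  have last : ((i : Fin r) → {j : Fin n // ix j = i} → T i) ≃ₗ[A]
      ((i : Fin r) → Fin (Fintype.card {j : Fin n // ix j = i}) → T i) :=
    LinearEquiv.piCongrRight fun i =>
      LinearEquiv.funCongrLeft A ↥(T i) (Fintype.equivFin {j : Fin n // ix j = i}).symm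
  exact e.trans <| (LinearEquiv.piCongrRight eqv).trans <| (regroup A T ix).trans last

/-! ### Pigeonhole for multiplicity vectors -/

theorem pigeon {r : ℕ} (c : Fin (r + 1) → Fin r → ℕ) :
    ∃ f g : Fin (r + 1) → ℕ, f ≠ g ∧
      ∀ i, ∑ j, f j * c j i = ∑ j, g j * c j i := by
  classical
  have hni : ¬ LinearIndependent ℤ (fun j : Fin (r + 1) => fun i : Fin r => (c j i : ℤ)) := by
    intro h
    have := h.fintype_card_le_finrank
    simp [Module.finrank_pi] at this
  obtain ⟨z, hz, j0, hj0⟩ := Fintype.not_linearIndependent_iff.mp hni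
  refine ⟨fun j => (z j).toNat, fun j => (-z j).toNat, ?_, ?_⟩
  · intro h
    have := congrFun h j0
    omega
  · intro i
    have h0 := congrFun hz i
    simp only [Finset.sum_apply, Pi.smul_apply, smul_eq_mul, Pi.zero_apply] at h0
    have : (↑(∑ j, (z j).toNat * c j i) : ℤ) = ↑(∑ j, (-z j).toNat * c j i) := by
      push_cast
      have : ∀ j : Fin (r + 1),
          ((z j).toNat : ℤ) * c j i = ((-z j).toNat : ℤ) * c j i + z j * c j i := by
        intro j
        have h1 : ((z j).toNat : ℤ) = ((-z j).toNat : ℤ) + z j := by omega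
        rw [h1]; ring
      rw [Finset.sum_congr rfl (fun j _ => this j), Finset.sum_add_distrib, h0, add_zero]
    exact_mod_cast this

/-- The big reshuffling equivalence. -/
def mega (A : Type) [Semiring A] {N r : ℕ} (M : Fin r → Type)
    [∀ i, AddCommMonoid (M i)] [∀ i, Module A (M i)]
    (f : Fin (N + 1) → ℕ) (c : Fin (N + 1) → Fin r → ℕ) :
    ((j : Fin (N + 1)) → Fin (f j) → (i : Fin r) → Fin (c j i) → M i) ≃ₗ[A]
      ((i : Fin r) → ((j : Fin (N + 1)) × (Fin (f j) × Fin (c j i))) → M i) where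
  toFun x := fun i p => x p.1 p.2.1 i p.2.2
  invFun y := fun j a i b => y i ⟨j, (a, b)⟩
  map_add' _ _ := rfl
  map_smul' _ _ := rfl
  left_inv _ := rfl
  right_inv _ := rfl

/-! ### From `FDRep` to modules over the monoid algebra, and back -/

variable {G : Type} [Group G]

/-- The functor sending a f.d. representation to its module over the monoid algebra. -/
noncomputable def toMod : FDRep ℂ G ⥤ ModuleCat (MonoidAlgebra ℂ G) where
  obj W := ModuleCat.of _ (Representation.asModule W.ρ)
  map {X Y} f := ModuleCat.ofHom
    { (f.hom.hom.hom : X →ₗ[ℂ] Y) with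
      map_smul' := fun r x =>
        Rep.to_Module_monoidAlgebra_map_aux X Y X.ρ Y.ρ f.hom.hom.hom
          (fun g => by ext x; exact congrArg (fun φ => φ.hom.hom x) (f.comm g)) r x }

instance : (toMod (G := G)).Additive := ⟨by intros; apply ModuleCat.hom_ext; apply LinearMap.ext; intro x; rfl⟩

/-- Transport an `A`-linear equivalence of underlying modules back to an iso of `FDRep`s. -/
noncomputable def isoOfLinearEquiv {X Y : FDRep ℂ G}
    (e : Representation.asModule X.ρ ≃ₗ[MonoidAlgebra ℂ G] Representation.asModule Y.ρ) :
    X ≅ Y := by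
  have hsmul : ∀ (c : ℂ) (x : X), e (c • x) = c • e x := by
    intro c x'
    let x : Representation.asModule X.ρ := x'
    have h1 := Representation.asModuleEquiv_symm_map_smul X.ρ c (Representation.asModuleEquiv X.ρ x)
    have h2 :=
      Representation.asModuleEquiv_symm_map_smul Y.ρ c (Representation.asModuleEquiv Y.ρ (e x))
    calc e (c • x) = e (algebraMap ℂ (MonoidAlgebra ℂ G) c • x) := congrArg e h1
      _ = algebraMap ℂ (MonoidAlgebra ℂ G) c • e x := e.map_smul _ _
      _ = c • e x := h2.symm
  let eC : X ≃ₗ[ℂ] (Y : Type) :=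
    { e.toAddEquiv with map_smul' := hsmul }
  refine Action.mkIso eC.toFGModuleCatIso ?_
  intro g
  apply FGModuleCat.hom_ext
  apply LinearMap.ext
  intro x'
  let x : Representation.asModule X.ρ := x'
  show eC (X.ρ g x) = Y.ρ g (eC x)
  have h1 := Representation.asModuleEquiv_symm_map_rho X.ρ g (Representation.asModuleEquiv X.ρ x)
  have h2 :=
    Representation.asModuleEquiv_symm_map_rho Y.ρ g (Representation.asModuleEquiv Y.ρ (e x))
  calc e (X.ρ g x) = e (MonoidAlgebra.of ℂ G g • x) := congrArg e h1
    _ = MonoidAlgebra.of ℂ G g • e x := e.map_smul _ _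
    _ = (Representation.asModuleEquiv Y.ρ).symm (Y.ρ g (e x)) := h2.symm

/-- `toMod` takes biproducts to products. -/
noncomputable def biprodEquiv {n : ℕ} (W : Fin n → FDRep ℂ G) :
    Representation.asModule (FDRep.ρ (⨁ W)) ≃ₗ[MonoidAlgebra ℂ G]
      ((j : Fin n) → Representation.asModule ((W j).ρ)) := by
  have i1 : toMod.obj (⨁ W) ≅ ⨁ fun j => toMod.obj (W j) := toMod.mapBiproduct W
  have i2 := ModuleCat.biproductIsoPi fun j => toMod.obj (W j)
  exact (i1 ≪≫ i2).toLinearEquiv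

/-- The module of a f.d. representation is finite over the monoid algebra. -/
theorem moduleFiniteA [Finite G] (W : FDRep ℂ G) :
    Module.Finite (MonoidAlgebra ℂ G) (Representation.asModule W.ρ) := by
  obtain ⟨s, hs⟩ := Module.Finite.fg_top (R := ℂ) (M := W)
  refine ⟨⟨s, ?_⟩⟩
  rw [eq_top_iff]
  rintro x -
  have hx : x ∈ Submodule.span ℂ (s : Set W) := by rw [hs]; trivial
  refine Submodule.span_induction (M := W) ?_ ?_ ?_ ?_ hx
  · intro y hy
    exact Submodule.subset_span hy
  · exact Submodule.zero_mem _
  · intro y z _ _ hy hz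
    exact Submodule.add_mem _ hy hz
  · intro a y _ hy
    have h1 := Representation.asModuleEquiv_symm_map_smul W.ρ a (Representation.asModuleEquiv W.ρ y)
    have : (Representation.asModuleEquiv W.ρ).symm (a • y) =
        algebraMap ℂ (MonoidAlgebra ℂ G) a • (Representation.asModuleEquiv W.ρ).symm y := h1
    rw [show a • y = (Representation.asModuleEquiv W.ρ).symm (a • y) from rfl, this]
    exact Submodule.smul_mem _ _ hy

end Stmt12Aux

open Stmt12Aux in
/-- every finite-dimensional complex representation of a finite group is
finite in Nori's sense: there are distinct polynomials `f ≠ g` with nonnegative integer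
coefficients such that `f(V) ≅ g(V)`. -/
theorem stmt_12 {G : Type} [Group G] [Finite G] (V : FDRep ℂ G) :
    ∃ (N : ℕ) (f g : Fin (N + 1) → ℕ), f ≠ g ∧ Nonempty (polyApply f V ≅ polyApply g V) := by
  classical
  haveI := Fintype.ofFinite G
  haveI : NeZero (Fintype.card G : ℂ) := ⟨Nat.cast_ne_zero.2 Fintype.card_ne_zero⟩
  obtain ⟨r, T, hTsimple, hT⟩ := simplesA (MonoidAlgebra ℂ G)
  haveI : ∀ j : ℕ, Module.Finite (MonoidAlgebra ℂ G)
      (Representation.asModule (tensorPow V j).ρ) := fun j => moduleFiniteA _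
  have hdec : ∀ j : Fin (r + 1), ∃ c : Fin r → ℕ,
      Nonempty (Representation.asModule (FDRep.ρ (tensorPow V (j : ℕ))) ≃ₗ[MonoidAlgebra ℂ G]
        ((i : Fin r) → Fin (c i) → T i)) :=
    fun j => decompT _ T hT _
  choose c hc using hdec
  obtain ⟨f, g, hfg, hsum⟩ := pigeon c
  refine ⟨r, f, g, hfg, ?_⟩
  have E : ∀ (f : Fin (r + 1) → ℕ),
      Nonempty (Representation.asModule (polyApply f V).ρ ≃ₗ[MonoidAlgebra ℂ G]
        ((i : Fin r) → ((j : Fin (r + 1)) × (Fin (f j) × Fin (c j i))) → T i)) := by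
    intro f
    have e1 := biprodEquiv fun j : Fin (r + 1) => ⨁ fun _ : Fin (f j) => tensorPow V (j : ℕ)
    have e2 : ∀ j : Fin (r + 1),
        Representation.asModule (FDRep.ρ (⨁ fun _ : Fin (f j) => tensorPow V (j : ℕ)))
          ≃ₗ[MonoidAlgebra ℂ G]
          (Fin (f j) → Representation.asModule (FDRep.ρ (tensorPow V (j : ℕ)))) :=
      fun j => biprodEquiv fun _ : Fin (f j) => tensorPow V (j : ℕ)
    have e3 : ∀ j : Fin (r + 1),
        (Fin (f j) → Representation.asModule (FDRep.ρ (tensorPow V (j : ℕ))))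
          ≃ₗ[MonoidAlgebra ℂ G] (Fin (f j) → (i : Fin r) → Fin (c j i) → T i) :=
      fun j => LinearEquiv.piCongrRight fun _ => (hc j).some
    exact ⟨e1.trans <| (LinearEquiv.piCongrRight e2).trans <|
      (LinearEquiv.piCongrRight e3).trans <| mega (MonoidAlgebra ℂ G) (fun i => T i) f c⟩
  obtain ⟨Ef⟩ := E f
  obtain ⟨Eg⟩ := E g
  have bridge : ((i : Fin r) → ((j : Fin (r + 1)) × (Fin (f j) × Fin (c j i))) → T i)
      ≃ₗ[MonoidAlgebra ℂ G]
      ((i : Fin r) → ((j : Fin (r + 1)) × (Fin (g j) × Fin (c j i))) → T i) :=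
    LinearEquiv.piCongrRight fun i =>
      LinearEquiv.funCongrLeft (MonoidAlgebra ℂ G) ↥(T i)
        (Fintype.equivOfCardEq (by
          simp only [Fintype.card_sigma, Fintype.card_prod, Fintype.card_fin]
          exact (hsum i).symm))
  exact ⟨isoOfLinearEquiv (Ef.trans (bridge.trans Eg.symm))⟩
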